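/- For n ≥ 2, every generating subset of the multiplicative semigroup A^+(B_n) contains at least one singleton-support element and at least one full-support (nonzero constant) element. -/

import Mathlib

def Bn (n : ℕ) : Type := Option (Fin n × Fin n)

def Bn.mul {n : ℕ} : Bn n → Bn n → Bn n
  | some (i, j), some (k, l) => if j = k then some (i, l) else none
  | _, _ => none

instance (n : ℕ) : Mul (Bn n) := ⟨Bn.mul⟩

instance (n : ℕ) : Semigroup (Bn n) where
  mul_assoc a b c := by
    show Bn.mul (Bn.mul a b) c = Bn.mul a (Bn.mul b c)
    rcases a with _ | ⟨i, j⟩ <;> rcases b with _ | ⟨k, l⟩ <;> rcases c with _ | ⟨p, q⟩ <;>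
      try rfl
    · show Bn.mul (@ite (Bn n) (j = k) _ (some (i, l)) none) none = none
      by_cases h1 : j = k <;> simp only [h1, ↓reduceIte] <;> rfl
    · show Bn.mul (@ite (Bn n) (j = k) _ (some (i, l)) none) (some (p, q)) =
        Bn.mul (some (i, j)) (@ite (Bn n) (l = p) _ (some (k, q)) none)
      have L : ∀ x y : Bn n, x = y → Bn.mul x (some (p, q)) = Bn.mul y (some (p, q)) :=
        fun _ _ h => h ▸ rfl
      have R : ∀ x y : Bn n, x = y → Bn.mul (some (i, j)) x = Bn.mul (some (i, j)) y :=
        fun _ _ h => h ▸ rfl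
      by_cases h1 : j = k <;> by_cases h2 : l = p
      · refine (L _ (some (i, l)) (if_pos h1)).trans (Eq.trans ?_ (R (some (k, q)) _ (if_pos h2).symm))
        exact (if_pos h2 : @ite (Bn n) (l = p) _ (some (i, q)) none = _).trans
          (if_pos h1 : @ite (Bn n) (j = k) _ (some (i, q)) none = _).symm
      · refine (L _ (some (i, l)) (if_pos h1)).trans (Eq.trans ?_ (R none _ (if_neg h2).symm))
        exact (if_neg h2 : @ite (Bn n) (l = p) _ (some (i, q)) none = _)
      · refine (L _ none (if_neg h1)).trans (Eq.trans ?_ (R (some (k, q)) _ (if_pos h2).symm))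
        exact (if_neg h1 : @ite (Bn n) (j = k) _ (some (i, q)) none = _).symm
      · refine (L _ none (if_neg h1)).trans (Eq.trans ?_ (R none _ (if_neg h2).symm))
        rfl

/-- Maps on `Bn n`, composed left-to-right: `x (f * g) = (x f) g`. -/
def MapBn (n : ℕ) : Type := Bn n → Bn n

instance (n : ℕ) : Monoid (MapBn n) where
  mul f g := fun x => g (f x)
  one := fun x => x
  mul_assoc _ _ _ := rfl
  one_mul _ := rfl
  mul_one _ := rfl

/-- The constant map `ξ_c`. -/
def constMap (n : ℕ) (c : Bn n) : MapBn n := fun _ => c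

/-- The `n`-support map `(p, q; σ)`, sending `(i, p) ↦ (iσ, q)` and all else to `θ`. -/
def nSuppMap (n : ℕ) (p q : Fin n) (σ : Equiv.Perm (Fin n)) : MapBn n :=
  fun x =>
    match x with
    | some (i, j) => if j = p then some (σ i, q) else none
    | none => none

instance (n : ℕ) : DecidableEq (Bn n) :=
  inferInstanceAs (DecidableEq (Option (Fin n × Fin n)))

/-- The singleton-support map `((k,l) → (p,q))`. -/
def sglMap (n : ℕ) (k l p q : Fin n) : MapBn n :=
  fun x => @ite _ (x = some (k, l)) (instDecidableEqBn n x (some (k, l))) (some (p, q)) none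

/-- The multiplicative semigroup reduct `A⁺(Bₙ)`, as a set of maps on `Bn n`. -/
def APlus (n : ℕ) : Set (MapBn n) :=
  {f | (∃ c, f = constMap n c) ∨ (∃ p q σ, f = nSuppMap n p q σ) ∨
       (∃ k l p q, f = sglMap n k l p q)}

/-- Independence of a subset of a semigroup. -/
def IndependentIn {S : Type*} [Semigroup S] (U : Set S) : Prop :=
  ∀ a ∈ U, a ∉ Subsemigroup.closure (U \ {a})

lemma mapbn_mul_apply {n : ℕ} (f g : MapBn n) (x : Bn n) : (f * g) x = g (f x) := rfl

/-- maps fixing `none` form a subsemigroup -/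
def FixNone (n : ℕ) : Subsemigroup (MapBn n) where
  carrier := {f | f none = none}
  mul_mem' := by
    intro f g hf hg
    show (f * g) none = none
    exact (congrArg g (show f none = none from hf)).trans hg

/-- constants and n-support maps form a subsemigroup -/
def ConstOrNSupp (n : ℕ) : Subsemigroup (MapBn n) where
  carrier := {f | (∃ c, f = constMap n c) ∨ ∃ p q σ, f = nSuppMap n p q σ}
  mul_mem' := by
    rintro f g (⟨c, rfl⟩ | ⟨p, q, σ, rfl⟩) hg
    · left
      exact ⟨g c, funext fun x => rfl⟩
    · rcases hg with ⟨c, rfl⟩ | ⟨p', q', σ', rfl⟩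
      · left
        exact ⟨c, funext fun x => rfl⟩
      · by_cases h : q = p'
        · right
          refine ⟨p, q', σ.trans σ', funext fun x => ?_⟩
          rw [mapbn_mul_apply]
          rcases x with _ | ⟨i, j⟩
          · rfl
          · simp only [nSuppMap]
            by_cases hj : j = p <;> simp [hj, h] <;> rfl
        · left
          refine ⟨none, funext fun x => ?_⟩
          rw [mapbn_mul_apply]
          rcases x with _ | ⟨i, j⟩
          · rfl
          · simp only [nSuppMap, constMap]
            by_cases hj : j = p <;> simp [hj, h] <;> rfl

theorem generating_set_contains_sgl_and_const (n : ℕ) (hn : 2 ≤ n) (U : Set (MapBn n))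
    (hU : U ⊆ APlus n) (hgen : (Subsemigroup.closure U : Set (MapBn n)) = APlus n) :
    (∃ f ∈ U, ∃ k l p q, f = sglMap n k l p q) ∧
    (∃ f ∈ U, ∃ c : Bn n, c ≠ none ∧ f = constMap n c) := by
  have h0 : (0 : ℕ) < n := by omega
  have h1 : (1 : ℕ) < n := by omega
  set z : Fin n := ⟨0, h0⟩
  set o : Fin n := ⟨1, h1⟩
  have hzo : z ≠ o := by
    intro h
    have := congrArg Fin.val h
    simp [z, o] at this
  constructor
  · -- singleton part
    by_contra hno
    push_neg at hno
    have hsub : U ⊆ (ConstOrNSupp n : Set (MapBn n)) := by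
      intro f hf
      rcases hU hf with h | h | ⟨k, l, p, q, rfl⟩
      · exact Or.inl h
      · exact Or.inr h
      · exact absurd rfl (hno _ hf k l p q)
    have hle : Subsemigroup.closure U ≤ ConstOrNSupp n :=
      Subsemigroup.closure_le.mpr hsub
    have hsgl : sglMap n z z z z ∈ (Subsemigroup.closure U : Set (MapBn n)) := by
      rw [hgen]
      show (∃ c, _ = constMap n c) ∨ (∃ p q σ, _ = nSuppMap n p q σ) ∨
        (∃ k l p q, _ = sglMap n k l p q)
      exact Or.inr (Or.inr ⟨z, z, z, z, rfl⟩)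
    rcases hle hsgl with ⟨c, hc⟩ | ⟨p, q, σ, hc⟩
    · have e1 := congrFun hc (some (z, z))
      have e2 := congrFun hc none
      rw [show sglMap n z z z z (some (z, z)) = some (z, z) from if_pos rfl] at e1
      rw [show sglMap n z z z z none = none from if_neg (Option.some_ne_none _).symm] at e2
      simp only [constMap] at e1 e2
      rw [← e2] at e1
      cases e1
    · have e1 := congrFun hc (some (z, z))
      have e2 := congrFun hc (some (o, z))
      have hne : (some (o, z) : Bn n) ≠ some (z, z) := fun h =>
        hzo (congrArg Prod.fst (Option.some.inj h)).symm
      rw [show sglMap n z z z z (some (z, z)) = some (z, z) from if_pos rfl] at e1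
      rw [show sglMap n z z z z (some (o, z)) = none from if_neg hne] at e2
      simp only [nSuppMap] at e1 e2
      by_cases hp : z = p
      · cases e2.trans (if_pos hp)
      · cases e1.trans (if_neg hp)
  · -- constant part
    by_contra hno
    have hsub : U ⊆ (FixNone n : Set (MapBn n)) := by
      intro f hf
      rcases hU hf with ⟨c, rfl⟩ | ⟨p, q, σ, rfl⟩ | ⟨k, l, p, q, rfl⟩
      · rcases c with _ | c
        · rfl
        · exact absurd ⟨_, hf, some c, Option.some_ne_none c, rfl⟩ hno
      · rfl
      · show sglMap n k l p q none = none
        simp [sglMap]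
        rfl
    have hle : Subsemigroup.closure U ≤ FixNone n :=
      Subsemigroup.closure_le.mpr hsub
    have hc : constMap n (some (z, z)) ∈ (Subsemigroup.closure U : Set (MapBn n)) := by
      rw [hgen]
      show (∃ c, _ = constMap n c) ∨ (∃ p q σ, _ = nSuppMap n p q σ) ∨
        (∃ k l p q, _ = sglMap n k l p q)
      exact Or.inl ⟨some (z, z), rfl⟩
    have := hle hc
    simp [FixNone, constMap] at this
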